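/- Let A be a T×m matrix over a field and let s ∈ [m-1]. Define D(A,s) as the set of pairs (q, S) with q ∈ [m], S ⊆ [m]\{q}, |S| = s, such that A_q ∉ span(A_{[m]\(S∪{q})}). Then |D(A,s)| ≤ T · C(m, s), where C(m,s) is the binomial coefficient. -/

import Mathlib

open Finset
open scoped Classical

lemma aux_card_le {F : Type*} [Field F] {T m : ℕ}
    (A : Matrix (Fin T) (Fin m) F) (S : Finset (Fin m)) :
    ((Finset.univ : Finset (Fin m)).filter fun q =>
        q ∉ S ∧ (fun i => A i q) ∉
          Submodule.span F ((fun j i => A i j) '' {j : Fin m | j ∉ S ∧ j ≠ q})).card ≤ T := by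
  set Q := ((Finset.univ : Finset (Fin m)).filter fun q =>
      q ∉ S ∧ (fun i => A i q) ∉
        Submodule.span F ((fun j i => A i j) '' {j : Fin m | j ∉ S ∧ j ≠ q})) with hQ
  have hli : LinearIndependent F (fun q : Q => fun i => A i (q : Fin m)) := by
    rw [linearIndependent_iff_notMem_span]
    intro q hq
    obtain ⟨hqS, hqspan⟩ := (Finset.mem_filter.mp q.2).2
    apply hqspan
    refine Submodule.span_mono ?_ hq
    rintro _ ⟨q', ⟨-, hne⟩, rfl⟩
    refine ⟨(q' : Fin m), ⟨(Finset.mem_filter.mp q'.2).2.1, ?_⟩, rfl⟩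
    intro h
    exact (Set.mem_singleton_iff.not.mp hne) (Subtype.ext h)
  have := hli.fintype_card_le_finrank
  rwa [Module.finrank_fin_fun, Fintype.card_coe] at this

/-- Upper bound on the number of decodable (request, side-information) pairs:
`|D(A,s)| ≤ T · C(m,s)`. -/
theorem stmt_3 {F : Type*} [Field F] {T m : ℕ}
    (A : Matrix (Fin T) (Fin m) F) (s : ℕ) (hs1 : 1 ≤ s) (hs2 : s ≤ m - 1) :
    ((Finset.univ : Finset (Fin m × Finset (Fin m))).filter fun p =>
        p.1 ∉ p.2 ∧ p.2.card = s ∧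
          (fun i => A i p.1) ∉
            Submodule.span F
              ((fun j i => A i j) '' {j : Fin m | j ∉ p.2 ∧ j ≠ p.1})).card
      ≤ T * m.choose s := by
  set D := ((Finset.univ : Finset (Fin m × Finset (Fin m))).filter fun p =>
        p.1 ∉ p.2 ∧ p.2.card = s ∧
          (fun i => A i p.1) ∉
            Submodule.span F
              ((fun j i => A i j) '' {j : Fin m | j ∉ p.2 ∧ j ≠ p.1})) with hD
  have hfib : D.card = ∑ S ∈ (Finset.univ : Finset (Fin m)).powersetCard s,
      (D.filter fun p => p.2 = S).card := by
    refine Finset.card_eq_sum_card_fiberwise ?_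
    intro p hp
    rw [Finset.mem_coe, Finset.mem_powersetCard]
    exact ⟨Finset.subset_univ _, ((Finset.mem_filter.mp (Finset.mem_coe.mp hp)).2).2.1⟩
  rw [hfib]
  calc ∑ S ∈ (Finset.univ : Finset (Fin m)).powersetCard s,
        (D.filter fun p => p.2 = S).card
      ≤ ∑ _S ∈ (Finset.univ : Finset (Fin m)).powersetCard s, T := by
        refine Finset.sum_le_sum ?_
        intro S _
        refine le_trans ?_ (aux_card_le A S)
        refine Finset.card_le_card_of_injOn Prod.fst ?_ ?_
        · intro p hp
          obtain ⟨hpD, hpS⟩ := Finset.mem_filter.mp hp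
          obtain ⟨h1, _, h3⟩ := (Finset.mem_filter.mp hpD).2
          subst hpS
          exact Finset.mem_filter.mpr ⟨Finset.mem_univ _, h1, h3⟩
        · intro p hp p' hp' h
          have h2 : p.2 = p'.2 :=
            (Finset.mem_filter.mp hp).2.trans ((Finset.mem_filter.mp hp').2).symm
          exact Prod.ext h h2
    _ = T * m.choose s := by
        rw [Finset.sum_const, smul_eq_mul, Finset.card_powersetCard,
          Finset.card_univ, Fintype.card_fin, Nat.mul_comm]
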